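/- arXiv:2302.04413 — 2 statements merged into one kernel-verified Lean document; each statement's English description precedes it below -/
import Mathlib

section
/- If M, B : ℝ → ℝ are continuous with M(t) ≥ 0 and B(t) ≥ 0, F₀ > 0, F is differentiable and satisfies F'(t) + (M(t)+B(t))·F(t) = F₀·B(t), and 0 ≤ F(0) ≤ F₀, then 0 ≤ F(t) ≤ F₀ for all t ≥ 0. -/
theorem stmt_8 (F M B : ℝ → ℝ) (F₀ : ℝ) (hF₀ : 0 < F₀)
    (hM : Continuous M) (hB : Continuous B)
    (hMnn : ∀ t, 0 ≤ M t) (hBnn : ∀ t, 0 ≤ B t)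
    (hdiff : Differentiable ℝ F)
    (hode : ∀ t, deriv F t + (M t + B t) * F t = F₀ * B t)
    (hinit : 0 ≤ F 0 ∧ F 0 ≤ F₀) :
    ∀ t, 0 ≤ t → 0 ≤ F t ∧ F t ≤ F₀ := by
  intro t ht
  set c : ℝ → ℝ := fun s => M s + B s with hc
  have hcCont : Continuous c := hM.add hB
  set a : ℝ → ℝ := fun u => ∫ s in (0:ℝ)..u, c s with ha_def
  have ha : ∀ u, HasDerivAt a (c u) u := fun u =>
    intervalIntegral.integral_hasDerivAt_right (hcCont.intervalIntegrable 0 u)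
      hcCont.aestronglyMeasurable.stronglyMeasurableAtFilter hcCont.continuousAt
  have ha0 : a 0 = 0 := by simp [ha_def]
  -- G u = F u * exp (a u)
  have hG : ∀ u, HasDerivAt (fun u => F u * Real.exp (a u))
      (F₀ * B u * Real.exp (a u)) u := by
    intro u
    have h1 := (hdiff u).hasDerivAt
    have h2 := (ha u).exp
    have h3 : HasDerivAt (fun u => F u * Real.exp (a u))
        (deriv F u * Real.exp (a u) + F u * (Real.exp (a u) * c u)) u := h1.mul h2
    convert h3 using 1
    show F₀ * B u * Real.exp (a u) =
      deriv F u * Real.exp (a u) + F u * (Real.exp (a u) * (M u + B u))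
    linear_combination (-Real.exp (a u)) * hode u
  have hGmono : Monotone (fun u => F u * Real.exp (a u)) := by
    apply monotone_of_deriv_nonneg
    · exact fun u => (hG u).differentiableAt
    · intro u
      rw [(hG u).deriv]
      have := Real.exp_pos (a u)
      have := hBnn u
      positivity
  -- H u = (F₀ - F u) * exp (a u)
  have hH : ∀ u, HasDerivAt (fun u => (F₀ - F u) * Real.exp (a u))
      (F₀ * M u * Real.exp (a u)) u := by
    intro u
    have h1 := ((hasDerivAt_const u F₀).sub (hdiff u).hasDerivAt)
    have h2 := (ha u).exp
    have h3 : HasDerivAt (fun u => (F₀ - F u) * Real.exp (a u))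
        ((0 - deriv F u) * Real.exp (a u) + (F₀ - F u) * (Real.exp (a u) * c u)) u := h1.mul h2
    convert h3 using 1
    show F₀ * M u * Real.exp (a u) =
      (0 - deriv F u) * Real.exp (a u) + (F₀ - F u) * (Real.exp (a u) * (M u + B u))
    linear_combination Real.exp (a u) * hode u
  have hHmono : Monotone (fun u => (F₀ - F u) * Real.exp (a u)) := by
    apply monotone_of_deriv_nonneg
    · exact fun u => (hH u).differentiableAt
    · intro u
      rw [(hH u).deriv]
      have := Real.exp_pos (a u)
      have := hMnn u
      positivity
  have hGt := hGmono ht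
  have hHt := hHmono ht
  simp only [ha0, Real.exp_zero, mul_one] at hGt hHt
  have hep := Real.exp_pos (a t)
  constructor
  · have : (0:ℝ) ≤ F t * Real.exp (a t) := le_trans hinit.1 hGt
    exact (mul_nonneg_iff_of_pos_right hep).mp this
  · have h0 : (0:ℝ) ≤ F₀ - F 0 := by linarith [hinit.2]
    have : (0:ℝ) ≤ (F₀ - F t) * Real.exp (a t) := le_trans h0 hHt
    have := (mul_nonneg_iff_of_pos_right hep).mp this
    linarith
end

section
/- Define Ω(t) = exp(λt − ωt²/2) with ω > 0, and let F solve F'(t) + (λ − ωt)·F(t) = F₀·(α − βt). Then F(t)/F₀ = (1/Ω(t))·{ F(0)/F₀ − (β/ω)·(1 − Ω(t)) + (αω − βλ)·(√(π/2)·e^{Λ²}/ω^{3/2})·[erf(Λ) + erf(ωt/√(2ω) − Λ)] }, where Λ = λ/√(2ω) and erf(z) = (2/√π)∫₀ᶻ e^{−τ²} dτ. -/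
open Real

/-- The error function: erf z = (2/√π) ∫₀ᶻ e^{−τ²} dτ. -/
noncomputable def erf (z : ℝ) : ℝ :=
  (2 / Real.sqrt π) * ∫ τ in (0:ℝ)..z, Real.exp (-τ ^ 2)

lemma erf_hasDerivAt (z : ℝ) :
    HasDerivAt erf ((2 / Real.sqrt π) * Real.exp (-z ^ 2)) z := by
  have hc : Continuous fun τ : ℝ => Real.exp (-τ ^ 2) := by continuity
  have h := (hc.integral_hasStrictDerivAt 0 z).hasDerivAt
  exact h.const_mul (2 / Real.sqrt π)

lemma erf_neg (z : ℝ) : erf (-z) = - erf z := by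
  unfold erf
  have : (∫ τ in (0:ℝ)..(-z), Real.exp (-τ ^ 2)) =
      - ∫ τ in (0:ℝ)..z, Real.exp (-τ ^ 2) := by
    rw [intervalIntegral.integral_symm]
    congr 1
    have := intervalIntegral.integral_comp_neg (a := (0:ℝ)) (b := z)
      (fun τ => Real.exp (-τ ^ 2))
    simpa using this.symm
  rw [this]; ring

theorem stmt_13 (F : ℝ → ℝ) (F₀ α β ν μ lam ω : ℝ)
    (hF₀ : 0 < F₀) (hω : 0 < ω) (hlam : lam = α + ν) (hom : ω = β + μ)
    (hdiff : Differentiable ℝ F)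
    (hode : ∀ t, deriv F t + (lam - ω * t) * F t = F₀ * (α - β * t)) :
    ∀ t, F t / F₀ =
      (1 / Real.exp (lam * t - ω * t ^ 2 / 2)) *
        (F 0 / F₀ - (β / ω) * (1 - Real.exp (lam * t - ω * t ^ 2 / 2)) +
          (α * ω - β * lam) *
            (Real.sqrt (π / 2) * Real.exp ((lam / Real.sqrt (2 * ω)) ^ 2) /
              ω ^ ((3 : ℝ) / 2)) *
            (erf (lam / Real.sqrt (2 * ω)) +
              erf (ω * t / Real.sqrt (2 * ω) - lam / Real.sqrt (2 * ω)))) := by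
  intro t
  have hπ : (0:ℝ) < π := Real.pi_pos
  set s : ℝ := Real.sqrt (2 * ω) with hs
  have hspos : 0 < s := Real.sqrt_pos.mpr (by positivity)
  have hs2 : s ^ 2 = 2 * ω := Real.sq_sqrt (by positivity)
  set Λ : ℝ := lam / s with hΛ
  set C : ℝ := (α * ω - β * lam) *
      (Real.sqrt (π / 2) * Real.exp (Λ ^ 2) / ω ^ ((3 : ℝ) / 2)) with hC
  set Ω : ℝ → ℝ := fun u => Real.exp (lam * u - ω * u ^ 2 / 2) with hΩdef
  have hΩ : ∀ u, HasDerivAt Ω ((lam - ω * u) * Ω u) u := by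
    intro u
    have h1 : HasDerivAt (fun u : ℝ => lam * u - ω * u ^ 2 / 2) (lam - ω * u) u := by
      have := ((hasDerivAt_id u).const_mul lam).sub
        (((hasDerivAt_pow 2 u).const_mul ω).div_const 2)
      refine this.congr_deriv ?_
      simp; ring
    simpa [hΩdef, mul_comm] using h1.exp
  set g : ℝ → ℝ := fun u => Ω u * F u -
      F₀ * (F 0 / F₀ - (β / ω) * (1 - Ω u) + C * (erf Λ + erf (ω * u / s - Λ))) with hg
  -- exp(-(ωu/s - Λ)^2) = Ω u * exp(-Λ^2)
  have hXexp : ∀ u : ℝ, Real.exp (-(ω * u / s - Λ) ^ 2) = Ω u * Real.exp (-Λ ^ 2) := by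
    intro u
    rw [hΩdef, ← Real.exp_add]
    congr 1
    have h1 : ω * u / s - Λ = (ω * u - lam) / s := by rw [hΛ]; ring
    have hΛ2 : Λ ^ 2 = lam ^ 2 / (2 * ω) := by rw [hΛ, div_pow, hs2]
    rw [h1, div_pow, hs2, hΛ2]
    field_simp
    ring
  -- coefficient identity
  have hsqrtω : Real.sqrt ω ^ 2 = ω := Real.sq_sqrt hω.le
  have hsqrtωpos : 0 < Real.sqrt ω := Real.sqrt_pos.mpr hω
  have hrpow : ω ^ ((3 : ℝ) / 2) = ω * Real.sqrt ω := by
    rw [show (3:ℝ)/2 = 1 + 1/2 by norm_num, Real.rpow_add hω, Real.rpow_one,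
      ← Real.sqrt_eq_rpow]
  have hsmul : s = Real.sqrt 2 * Real.sqrt ω := by
    rw [hs, Real.sqrt_mul (by norm_num)]
  have hsqrt2 : Real.sqrt 2 ^ 2 = 2 := Real.sq_sqrt (by norm_num)
  have hsqrtπ : Real.sqrt π ^ 2 = π := Real.sq_sqrt hπ.le
  have hsqrtπpos : 0 < Real.sqrt π := Real.sqrt_pos.mpr hπ
  have hsqrt2pos : (0:ℝ) < Real.sqrt 2 := Real.sqrt_pos.mpr (by norm_num)
  have hpihalf : Real.sqrt (π / 2) = Real.sqrt π / Real.sqrt 2 := by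
    rw [Real.sqrt_div' π (by norm_num)]  -- might be wrong name
  have hcoef : Real.sqrt (π / 2) * Real.exp (Λ ^ 2) / ω ^ ((3 : ℝ) / 2) *
      ((2 / Real.sqrt π) * Real.exp (-Λ ^ 2) * (ω / s)) = 1 / ω := by
    rw [hpihalf, hrpow, hsmul]
    have hee : Real.exp (Λ ^ 2) * Real.exp (-Λ ^ 2) = 1 := by
      rw [← Real.exp_add]; simp
    have h22 : Real.sqrt 2 * Real.sqrt 2 = 2 := by nlinarith [hsqrt2]
    have hωω : Real.sqrt ω * Real.sqrt ω = ω := by nlinarith [hsqrtω]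
    have hstep : Real.sqrt π / Real.sqrt 2 * Real.exp (Λ ^ 2) / (ω * Real.sqrt ω) *
        (2 / Real.sqrt π * Real.exp (-Λ ^ 2) * (ω / (Real.sqrt 2 * Real.sqrt ω))) =
        (Real.exp (Λ ^ 2) * Real.exp (-Λ ^ 2)) * (Real.sqrt π * (2 * ω)) /
          (Real.sqrt π * ((Real.sqrt 2 * Real.sqrt 2) * ((Real.sqrt ω * Real.sqrt ω) * ω))) := by
      ring
    rw [hstep, hee, h22, hωω, one_mul]
    rw [mul_div_mul_left _ _ hsqrtπpos.ne']
    rw [show (2 : ℝ) * (ω * ω) = (2 * ω) * ω by ring]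
    rw [div_eq_div_iff (by positivity) hω.ne']
    ring
  -- derivative of g is zero
  have hgderiv : ∀ u, HasDerivAt g 0 u := by
    intro u
    have hL : HasDerivAt (fun u => Ω u * F u)
        ((lam - ω * u) * Ω u * F u + Ω u * deriv F u) u :=
      (hΩ u).mul (hdiff u).hasDerivAt
    have hinner : HasDerivAt (fun u : ℝ => ω * u / s - Λ) (ω / s) u := by
      have := ((hasDerivAt_id u).const_mul ω).div_const s
      simpa using this.sub_const Λ
    have herf : HasDerivAt (fun u : ℝ => erf (ω * u / s - Λ))
        ((2 / Real.sqrt π) * Real.exp (-(ω * u / s - Λ) ^ 2) * (ω / s)) u :=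
      (erf_hasDerivAt _).comp u hinner
    have hR : HasDerivAt (fun u => F₀ * (F 0 / F₀ - (β / ω) * (1 - Ω u) +
        C * (erf Λ + erf (ω * u / s - Λ))))
        (F₀ * ((β / ω) * ((lam - ω * u) * Ω u) +
          C * ((2 / Real.sqrt π) * Real.exp (-(ω * u / s - Λ) ^ 2) * (ω / s)))) u := by
      have h1 : HasDerivAt (fun u => (β / ω) * (1 - Ω u)) ((β / ω) * (0 - (lam - ω * u) * Ω u)) u :=
        ((hasDerivAt_const u (1:ℝ)).sub (hΩ u)).const_mul (β / ω)
      have h2 : HasDerivAt (fun u => C * (erf Λ + erf (ω * u / s - Λ)))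
          (C * (0 + (2 / Real.sqrt π) * Real.exp (-(ω * u / s - Λ) ^ 2) * (ω / s))) u :=
        ((hasDerivAt_const u (erf Λ)).add herf).const_mul C
      have h3 := (((hasDerivAt_const u (F 0 / F₀)).sub h1).add h2).const_mul F₀
      refine h3.congr_deriv ?_
      ring
    have := hL.sub hR
    refine this.congr_deriv ?_
    have hodeu := hode u
    have hder : deriv F u = F₀ * (α - β * u) - (lam - ω * u) * F u := by linarith
    have hterm : C * ((2 / Real.sqrt π) * Real.exp (-(ω * u / s - Λ) ^ 2) * (ω / s)) =
        (α * ω - β * lam) / ω * Ω u := by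
      rw [hXexp u, hC]
      linear_combination (α * ω - β * lam) * Ω u * hcoef
    rw [hder, hterm]
    field_simp <;> ring
  have hgconst : g t = g 0 :=
    is_const_of_deriv_eq_zero (fun u => (hgderiv u).differentiableAt)
      (fun u => (hgderiv u).deriv) t 0
  have hg0 : g 0 = 0 := by
    have h0 : ω * 0 / s - Λ = -Λ := by ring
    simp only [hg, hΩdef]
    rw [h0, erf_neg]
    simp only [mul_zero, ne_eq, OfNat.ofNat_ne_zero, not_false_eq_true, zero_pow, zero_div,
      sub_zero, sub_self, Real.exp_zero]
    field_simp <;> ring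
  have key : Ω t * F t = F₀ * (F 0 / F₀ - (β / ω) * (1 - Ω t) +
      C * (erf Λ + erf (ω * t / s - Λ))) := by
    have : g t = 0 := hgconst.trans hg0
    rw [hg] at this
    linarith
  have hΩpos : 0 < Ω t := Real.exp_pos _
  have hΩt : Real.exp (lam * t - ω * t ^ 2 / 2) = Ω t := rfl
  rw [hΩt]
  have hE : Ω t ≠ 0 := hΩpos.ne'
  rw [one_div, ← div_eq_inv_mul, div_eq_div_iff hF₀.ne' hE]
  linear_combination key
end
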